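/- Let 0 < p < 2, u > 0, and consider the embedding of ℓ^p into ℓ^2. For x^obs ∈ ℓ^2 with ‖x − x^obs‖₂ ≤ δ and x̂_α a minimizer over z ∈ ℓ^p of (1/(2α))‖x^obs − z‖₂² + (1/u)‖z‖_p^u, suppose the true x lies in the weak-ℓ^v space wℓ^v for some v ∈ (p,2), with ‖x‖_{wℓ^v} ≤ ϱ. Then under the a-priori parameter choice α ∼ ϱ^{−u/θ} δ^{((1−θ)u+2θ)/θ} with θ = p(2−v)/(v(2−p)), one has ‖x − x̂_α‖₂ = O(δ) and ‖x̂_α‖_p = O(δ^{2(p−v)/(p(2−v))}) as δ → 0. -/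

import Mathlib

open Set ENNReal MeasureTheory

/-- The `ℓ^p` (quasi-)norm `(∑ₖ |xₖ|^p)^{1/p}` with values in `ℝ≥0∞`. -/
noncomputable def lpNorm (p : ℝ) (x : ℕ → ℝ) : ℝ≥0∞ :=
  (∑' k, ENNReal.ofReal (|x k| ^ p)) ^ (1 / p)

/-- The weak-`ℓ^v` quasi-norm, `‖x‖_{wℓ^v} = (sup_{α>0} α^v #{k : |x_k| > α})^{1/v}`. -/
noncomputable def weakLpNorm (v : ℝ) (x : ℕ → ℝ) : ℝ≥0∞ :=
  (⨆ α ∈ Ioi (0 : ℝ),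
    ENNReal.ofReal α ^ v * ∑' k, (if α < |x k| then 1 else 0 : ℝ≥0∞)) ^ (1 / v)

lemma weak_count {v : ℝ} (hv : 0 < v) {x : ℕ → ℝ} {ϱ : ℝ}
    (h : weakLpNorm v x ≤ ENNReal.ofReal ϱ) {β : ℝ} (hβ : 0 < β) :
    (∑' k, (if β < |x k| then 1 else 0 : ℝ≥0∞)) ≤
      ENNReal.ofReal ϱ ^ v / ENNReal.ofReal β ^ v := by
  have h1 : ENNReal.ofReal β ^ v * (∑' k, (if β < |x k| then 1 else 0 : ℝ≥0∞)) ≤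
      ⨆ α ∈ Ioi (0 : ℝ), ENNReal.ofReal α ^ v *
        ∑' k, (if α < |x k| then 1 else 0 : ℝ≥0∞) :=
    le_biSup (fun α => ENNReal.ofReal α ^ v * ∑' k, (if α < |x k| then 1 else 0 : ℝ≥0∞))
      (mem_Ioi.2 hβ)
  have h2 := ENNReal.rpow_le_rpow h hv.le
  rw [weakLpNorm, ← ENNReal.rpow_mul, one_div, inv_mul_cancel₀ hv.ne',
    ENNReal.rpow_one] at h2
  have h3 := h1.trans h2
  rw [ENNReal.le_div_iff_mul_le (Or.inl ?_) (Or.inl ?_), mul_comm]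
  · exact h3
  · simp [ENNReal.rpow_eq_zero_iff, ENNReal.ofReal_eq_zero, hβ, not_le.2 hβ, hv]
  · exact ENNReal.rpow_ne_top_of_nonneg hv.le ENNReal.ofReal_ne_top


-- small part: |t| ≤ β
lemma small_pointwise {q β : ℝ} (hq : 0 < q) (hβ : 0 < β) {t : ℝ} (ht : |t| ≤ β) :
    ENNReal.ofReal (|t| ^ q) ≤
      ∑' j : ℕ, ENNReal.ofReal ((β * (2:ℝ)⁻¹ ^ j) ^ q) *
        (if β * (2:ℝ)⁻¹ ^ (j + 1) < |t| then 1 else 0) := by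
  rcases eq_or_lt_of_le (abs_nonneg t) with h0 | h0
  · simp [← h0, Real.zero_rpow hq.ne']
  · have hex : ∃ j : ℕ, β * (2:ℝ)⁻¹ ^ (j + 1) < |t| := by
      obtain ⟨n, hn⟩ := exists_pow_lt_of_lt_one (div_pos h0 hβ) (by norm_num : (2:ℝ)⁻¹ < 1)
      refine ⟨n, ?_⟩
      have h1 : (2:ℝ)⁻¹ ^ (n + 1) ≤ (2:ℝ)⁻¹ ^ n := by
        rw [pow_succ]
        nlinarith [pow_pos (by norm_num : (0:ℝ) < 2⁻¹) n]
      calc β * (2:ℝ)⁻¹ ^ (n + 1) ≤ β * (2:ℝ)⁻¹ ^ n := by gcongr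
        _ < β * (|t| / β) := by gcongr
        _ = |t| := by field_simp
    classical
    have hj : β * (2:ℝ)⁻¹ ^ (Nat.find hex + 1) < |t| := Nat.find_spec hex
    have hup : |t| ≤ β * (2:ℝ)⁻¹ ^ (Nat.find hex) := by
      rcases Nat.eq_zero_or_pos (Nat.find hex) with h | h
      · rw [h, pow_zero, mul_one]; exact ht
      · obtain ⟨m, hm⟩ := Nat.exists_eq_succ_of_ne_zero h.ne'
        rw [hm]
        exact not_lt.1 (Nat.find_min hex (m := m) (by omega))
    calc ENNReal.ofReal (|t| ^ q)
        ≤ ENNReal.ofReal ((β * (2:ℝ)⁻¹ ^ (Nat.find hex)) ^ q) *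
            (if β * (2:ℝ)⁻¹ ^ (Nat.find hex + 1) < |t| then 1 else 0) := by
          rw [if_pos hj, mul_one]
          exact ENNReal.ofReal_le_ofReal (Real.rpow_le_rpow (abs_nonneg t) hup hq.le)
      _ ≤ _ := ENNReal.le_tsum (Nat.find hex)

-- big part: β < |t|
lemma big_pointwise {q β : ℝ} (hq : 0 < q) (hβ : 0 < β) {t : ℝ} (ht : β < |t|) :
    ENNReal.ofReal (|t| ^ q) ≤
      ∑' j : ℕ, ENNReal.ofReal ((β * 2 ^ (j + 1)) ^ q) *
        (if β * (2:ℝ) ^ j < |t| then 1 else 0) := by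
  have hex : ∃ j : ℕ, |t| ≤ β * (2:ℝ) ^ (j + 1) := by
    obtain ⟨n, hn⟩ := pow_unbounded_of_one_lt (|t| / β) (by norm_num : (1:ℝ) < 2)
    refine ⟨n, ?_⟩
    have h1 : (2:ℝ) ^ n ≤ (2:ℝ) ^ (n + 1) := by
      rw [pow_succ]
      nlinarith [pow_pos (by norm_num : (0:ℝ) < 2) n]
    have := (div_lt_iff₀ hβ).1 hn
    nlinarith [pow_pos (by norm_num : (0:ℝ) < 2) n]
  classical
  have hj : |t| ≤ β * (2:ℝ) ^ (Nat.find hex + 1) := Nat.find_spec hex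
  have hlow : β * (2:ℝ) ^ (Nat.find hex) < |t| := by
    rcases Nat.eq_zero_or_pos (Nat.find hex) with h | h
    · simpa [h] using ht
    · obtain ⟨m, hm⟩ := Nat.exists_eq_succ_of_ne_zero h.ne'
      rw [hm]
      exact not_le.1 (Nat.find_min hex (m := m) (by omega))
  calc ENNReal.ofReal (|t| ^ q)
      ≤ ENNReal.ofReal ((β * 2 ^ (Nat.find hex + 1)) ^ q) *
          (if β * (2:ℝ) ^ (Nat.find hex) < |t| then 1 else 0) := by
        rw [if_pos hlow, mul_one]
        exact ENNReal.ofReal_le_ofReal (Real.rpow_le_rpow (abs_nonneg t) hj hq.le)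
    _ ≤ _ := ENNReal.le_tsum (Nat.find hex)


lemma real_id_small {v β ϱ : ℝ} (hβ : 0 < β) (hϱ : 0 < ϱ) (j : ℕ) :
    (β * (2:ℝ)⁻¹ ^ j) ^ (2:ℝ) * (ϱ ^ v / (β * (2:ℝ)⁻¹ ^ (j + 1)) ^ v) =
      ((2:ℝ) ^ v * (ϱ ^ v * β ^ (2 - v))) * ((2:ℝ) ^ (v - 2)) ^ j := by
  have h2 : (0:ℝ) < 2 := by norm_num
  have e1 : ∀ n : ℕ, (2:ℝ)⁻¹ ^ n = (2:ℝ) ^ (-(n:ℝ)) := by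
    intro n
    rw [← Real.rpow_natCast (2:ℝ)⁻¹ n, ← Real.rpow_neg_one (2:ℝ), ← Real.rpow_mul h2.le]
    norm_num
  have e2 : ∀ n : ℕ, ((2:ℝ) ^ (v-2)) ^ n = (2:ℝ) ^ ((v-2)*(n:ℝ)) := by
    intro n
    rw [← Real.rpow_natCast ((2:ℝ)^(v-2)) n, ← Real.rpow_mul h2.le]
  rw [e1 j, e1 (j+1), e2 j,
    Real.mul_rpow hβ.le (Real.rpow_nonneg h2.le _),
    Real.mul_rpow hβ.le (Real.rpow_nonneg h2.le _),
    ← Real.rpow_mul h2.le (-(j:ℝ)) 2, ← Real.rpow_mul h2.le (-((j+1:ℕ):ℝ)) v,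
    div_eq_mul_inv, mul_inv, ← Real.rpow_neg hβ.le, ← Real.rpow_neg h2.le]
  push_cast
  rw [show (2:ℝ) - v = 2 + -v by ring, Real.rpow_add hβ]
  have h : (2:ℝ)^v * (2:ℝ)^((v-2)*(j:ℝ)) = 2^(-(j:ℝ)*2) * 2^(-(-((j:ℝ)+1)*v)) := by
    rw [← Real.rpow_add h2, ← Real.rpow_add h2]
    congr 1
    ring
  calc β ^ (2:ℝ) * 2^(-(j:ℝ)*2) * (ϱ^v * (β^(-v) * 2^(-(-((j:ℝ)+1)*v))))
      = (2^(-(j:ℝ)*2) * 2^(-(-((j:ℝ)+1)*v))) * (ϱ^v * (β^(2:ℝ) * β^(-v))) := by ring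
    _ = (2^v * (2:ℝ)^((v-2)*(j:ℝ))) * (ϱ^v * (β^(2:ℝ) * β^(-v))) := by rw [h]
    _ = _ := by ring

lemma real_id_big {p v β ϱ : ℝ} (hβ : 0 < β) (hϱ : 0 < ϱ) (j : ℕ) :
    (β * (2:ℝ) ^ (j + 1)) ^ p * (ϱ ^ v / (β * (2:ℝ) ^ j) ^ v) =
      ((2:ℝ) ^ p * (ϱ ^ v * β ^ (p - v))) * ((2:ℝ) ^ (p - v)) ^ j := by
  have h2 : (0:ℝ) < 2 := by norm_num
  have e1 : ∀ n : ℕ, (2:ℝ) ^ n = (2:ℝ) ^ ((n:ℝ)) := fun n => (Real.rpow_natCast 2 n).symm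
  have e2 : ∀ n : ℕ, ((2:ℝ) ^ (p-v)) ^ n = (2:ℝ) ^ ((p-v)*(n:ℝ)) := by
    intro n
    rw [← Real.rpow_natCast ((2:ℝ)^(p-v)) n, ← Real.rpow_mul h2.le]
  rw [e1 (j+1), e1 j, e2 j,
    Real.mul_rpow hβ.le (Real.rpow_nonneg h2.le _),
    Real.mul_rpow hβ.le (Real.rpow_nonneg h2.le _),
    ← Real.rpow_mul h2.le ((j+1:ℕ):ℝ) p, ← Real.rpow_mul h2.le ((j:ℕ):ℝ) v,
    div_eq_mul_inv, mul_inv, ← Real.rpow_neg hβ.le, ← Real.rpow_neg h2.le]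
  push_cast
  rw [show p - v = p + -v by ring, Real.rpow_add hβ]
  have h : (2:ℝ)^p * (2:ℝ)^((p-v)*(j:ℝ)) = 2^(((j:ℝ)+1)*p) * 2^(-((j:ℝ)*v)) := by
    rw [← Real.rpow_add h2, ← Real.rpow_add h2]
    congr 1
    ring
  calc β ^ p * 2^(((j:ℝ)+1)*p) * (ϱ^v * (β^(-v) * 2^(-((j:ℝ)*v))))
      = (2^(((j:ℝ)+1)*p) * 2^(-((j:ℝ)*v))) * (ϱ^v * (β^p * β^(-v))) := by ring
    _ = (2^p * (2:ℝ)^((p-v)*(j:ℝ))) * (ϱ^v * (β^p * β^(-v))) := by rw [h]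
    _ = _ := by ring

lemma geom_sum_ofReal {r : ℝ} (hr0 : 0 ≤ r) (hr1 : r < 1) {K : ℝ} (hK : 0 ≤ K) :
    (∑' j : ℕ, ENNReal.ofReal (K * r ^ j)) = ENNReal.ofReal (K * (1 - r)⁻¹) := by
  have : ∀ j : ℕ, ENNReal.ofReal (K * r ^ j) = ENNReal.ofReal K * ENNReal.ofReal r ^ j := by
    intro j
    rw [ENNReal.ofReal_mul hK, ENNReal.ofReal_pow hr0]
  rw [tsum_congr this, ENNReal.tsum_mul_left, ENNReal.tsum_geometric,
    ← ENNReal.ofReal_one, ← ENNReal.ofReal_sub _ hr0, (ENNReal.ofReal_inv_of_pos (by linarith : (0:ℝ) < 1 - r)).symm, ← ENNReal.ofReal_mul hK]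

lemma smallPartSum {v β ϱ : ℝ} (hv0 : 0 < v) (hv2 : v < 2) (hβ : 0 < β) (hϱ : 0 < ϱ)
    {x : ℕ → ℝ} (hw : weakLpNorm v x ≤ ENNReal.ofReal ϱ) :
    (∑' k, ENNReal.ofReal (|(if β < |x k| then 0 else x k : ℝ)| ^ (2:ℝ))) ≤
      ENNReal.ofReal ((2:ℝ)^v * (ϱ^v * β^(2-v)) * (1 - (2:ℝ)^(v-2))⁻¹) := by
  have h2 : (0:ℝ) < 2 := by norm_num
  have hbj : ∀ j : ℕ, (0:ℝ) < β * (2:ℝ)⁻¹ ^ (j+1) := fun j => by positivity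
  calc (∑' k, ENNReal.ofReal (|(if β < |x k| then 0 else x k : ℝ)| ^ (2:ℝ)))
      ≤ ∑' k, ∑' j : ℕ, ENNReal.ofReal ((β * (2:ℝ)⁻¹ ^ j) ^ (2:ℝ)) *
          (if β * (2:ℝ)⁻¹ ^ (j + 1) < |x k| then 1 else 0) := by
        apply ENNReal.tsum_le_tsum
        intro k
        by_cases h : β < |x k|
        · simp [h, Real.zero_rpow (by norm_num : (2:ℝ) ≠ 0)]
        · rw [if_neg h]
          exact small_pointwise h2 hβ (not_lt.1 h)
    _ = ∑' j : ℕ, ENNReal.ofReal ((β * (2:ℝ)⁻¹ ^ j) ^ (2:ℝ)) *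
          ∑' k, (if β * (2:ℝ)⁻¹ ^ (j + 1) < |x k| then 1 else 0 : ℝ≥0∞) := by
        rw [ENNReal.tsum_comm]
        exact tsum_congr fun j => ENNReal.tsum_mul_left
    _ ≤ ∑' j : ℕ, ENNReal.ofReal ((β * (2:ℝ)⁻¹ ^ j) ^ (2:ℝ)) *
          (ENNReal.ofReal ϱ ^ v / ENNReal.ofReal (β * (2:ℝ)⁻¹ ^ (j+1)) ^ v) := by
        apply ENNReal.tsum_le_tsum
        intro j
        exact mul_le_mul_right (weak_count hv0 hw (hbj j)) _
    _ = ∑' j : ℕ, ENNReal.ofReal (((2:ℝ)^v * (ϱ^v * β^(2-v))) * ((2:ℝ)^(v-2)) ^ j) := by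
        refine tsum_congr fun j => ?_
        rw [ENNReal.ofReal_rpow_of_nonneg hϱ.le hv0.le,
          ENNReal.ofReal_rpow_of_nonneg (hbj j).le hv0.le,
          ← ENNReal.ofReal_div_of_pos (Real.rpow_pos_of_pos (hbj j) v),
          ← ENNReal.ofReal_mul (by positivity), real_id_small hβ hϱ j]
    _ = ENNReal.ofReal (((2:ℝ)^v * (ϱ^v * β^(2-v))) * (1 - (2:ℝ)^(v-2))⁻¹) :=
        geom_sum_ofReal (by positivity)
          (Real.rpow_lt_one_of_one_lt_of_neg (by norm_num) (by linarith)) (by positivity)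

lemma bigPartSum {p v β ϱ : ℝ} (hp0 : 0 < p) (hpv : p < v) (hv0 : 0 < v) (hβ : 0 < β) (hϱ : 0 < ϱ)
    {x : ℕ → ℝ} (hw : weakLpNorm v x ≤ ENNReal.ofReal ϱ) :
    (∑' k, ENNReal.ofReal (|(if β < |x k| then x k else 0 : ℝ)| ^ p)) ≤
      ENNReal.ofReal ((2:ℝ)^p * (ϱ^v * β^(p-v)) * (1 - (2:ℝ)^(p-v))⁻¹) := by
  have h2 : (0:ℝ) < 2 := by norm_num
  have hbj : ∀ j : ℕ, (0:ℝ) < β * (2:ℝ) ^ j := fun j => by positivity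
  calc (∑' k, ENNReal.ofReal (|(if β < |x k| then x k else 0 : ℝ)| ^ p))
      ≤ ∑' k, ∑' j : ℕ, ENNReal.ofReal ((β * (2:ℝ) ^ (j+1)) ^ p) *
          (if β * (2:ℝ) ^ j < |x k| then 1 else 0) := by
        apply ENNReal.tsum_le_tsum
        intro k
        by_cases h : β < |x k|
        · rw [if_pos h]
          exact big_pointwise hp0 hβ h
        · simp [h, Real.zero_rpow hp0.ne']
    _ = ∑' j : ℕ, ENNReal.ofReal ((β * (2:ℝ) ^ (j+1)) ^ p) *
          ∑' k, (if β * (2:ℝ) ^ j < |x k| then 1 else 0 : ℝ≥0∞) := by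
        rw [ENNReal.tsum_comm]
        exact tsum_congr fun j => ENNReal.tsum_mul_left
    _ ≤ ∑' j : ℕ, ENNReal.ofReal ((β * (2:ℝ) ^ (j+1)) ^ p) *
          (ENNReal.ofReal ϱ ^ v / ENNReal.ofReal (β * (2:ℝ) ^ j) ^ v) := by
        apply ENNReal.tsum_le_tsum
        intro j
        exact mul_le_mul_right (weak_count hv0 hw (hbj j)) _
    _ = ∑' j : ℕ, ENNReal.ofReal (((2:ℝ)^p * (ϱ^v * β^(p-v))) * ((2:ℝ)^(p-v)) ^ j) := by
        refine tsum_congr fun j => ?_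
        rw [ENNReal.ofReal_rpow_of_nonneg hϱ.le hv0.le,
          ENNReal.ofReal_rpow_of_nonneg (hbj j).le hv0.le,
          ← ENNReal.ofReal_div_of_pos (Real.rpow_pos_of_pos (hbj j) v),
          ← ENNReal.ofReal_mul (by positivity), real_id_big hβ hϱ j]
    _ = ENNReal.ofReal (((2:ℝ)^p * (ϱ^v * β^(p-v))) * (1 - (2:ℝ)^(p-v))⁻¹) :=
        geom_sum_ofReal (by positivity)
          (Real.rpow_lt_one_of_one_lt_of_neg (by norm_num) (by linarith)) (by positivity)

lemma lpNorm_eq (p : ℝ) (hp : 0 ≤ p) (x : ℕ → ℝ) :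
    lpNorm p x = (∑' k, ENNReal.ofReal |x k| ^ p) ^ (1/p) := by
  unfold _root_.lpNorm
  congr 1
  exact tsum_congr fun k => (ENNReal.ofReal_rpow_of_nonneg (abs_nonneg _) hp).symm

lemma l2_triangle (f g : ℕ → ℝ) : lpNorm 2 (f + g) ≤ lpNorm 2 f + lpNorm 2 g := by
  rw [lpNorm_eq 2 (by norm_num), lpNorm_eq 2 (by norm_num), lpNorm_eq 2 (by norm_num)]
  calc (∑' k, ENNReal.ofReal |(f+g) k| ^ (2:ℝ)) ^ (1/(2:ℝ))
      ≤ (∑' k, (ENNReal.ofReal |f k| + ENNReal.ofReal |g k|) ^ (2:ℝ)) ^ (1/(2:ℝ)) := by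
        gcongr with k
        rw [← ENNReal.ofReal_add (abs_nonneg _) (abs_nonneg _)]
        exact ENNReal.ofReal_le_ofReal (abs_add_le _ _)
    _ ≤ _ := by
        rw [← lintegral_count, ← lintegral_count (fun k => ENNReal.ofReal |f k| ^ (2:ℝ)),
          ← lintegral_count (fun k => ENNReal.ofReal |g k| ^ (2:ℝ))]
        exact ENNReal.lintegral_Lp_add_le measurable_from_top.aemeasurable
          measurable_from_top.aemeasurable (by norm_num)


lemma lpNorm_congr (q : ℝ) (x y : ℕ → ℝ) (h : ∀ k, |x k| = |y k|) :
    lpNorm q x = lpNorm q y := by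
  unfold _root_.lpNorm
  congr 1
  exact tsum_congr fun k => by rw [h k]

lemma lpNorm_le_of_tsum_le {q : ℝ} (hq : 0 < q) {x : ℕ → ℝ} {c : ℝ} (hc : 0 ≤ c)
    (h : (∑' k, ENNReal.ofReal (|x k| ^ q)) ≤ ENNReal.ofReal c) :
    lpNorm q x ≤ ENNReal.ofReal (c ^ (1/q)) := by
  rw [_root_.lpNorm, ← ENNReal.ofReal_rpow_of_nonneg hc (by positivity)]
  exact ENNReal.rpow_le_rpow h (by positivity)

lemma rpow_rpow_cancel {X : ℝ≥0∞} {s : ℝ} (hs : s ≠ 0) : (X ^ s) ^ (1/s) = X := by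
  rw [← ENNReal.rpow_mul, mul_one_div, div_self hs, ENNReal.rpow_one]

lemma extract_bound {X : ℝ≥0∞} {a R : ℝ} (ha : 0 < a)
    (h : ENNReal.ofReal (1/a) * X ≤ ENNReal.ofReal R) : X ≤ ENNReal.ofReal (a * R) := by
  have h1 : ENNReal.ofReal a * ENNReal.ofReal (1/a) = 1 := by
    rw [← ENNReal.ofReal_mul ha.le, mul_one_div, div_self ha.ne', ENNReal.ofReal_one]
  calc X = (ENNReal.ofReal a * ENNReal.ofReal (1/a)) * X := by rw [h1, one_mul]
    _ = ENNReal.ofReal a * (ENNReal.ofReal (1/a) * X) := by ring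
    _ ≤ ENNReal.ofReal a * ENNReal.ofReal R := by exact mul_le_mul_right h _
    _ = ENNReal.ofReal (a * R) := (ENNReal.ofReal_mul ha.le).symm


set_option maxHeartbeats 2000000 in
/-- Convergence rates for oversmoothing `ℓ^p`-penalized Tikhonov regularization of the
embedding `ℓ^p ↪ ℓ^2` (`0 < p < 2`): if `‖x‖_{wℓ^v} ≤ ϱ` for some `v ∈ (p,2)` and the
regularization parameter is chosen a priori, `α ∼ ϱ^{−u/θ} δ^{((1−θ)u+2θ)/θ}` with
`θ = p(2−v)/(v(2−p))`, then `‖x − x̂_α‖₂ = O(δ)` and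
`‖x̂_α‖_p = O(δ^{2(p−v)/(p(2−v))})` as `δ → 0`. -/
theorem lp_embedding_rates (p u v ϱ cl cr : ℝ)
    (hp0 : 0 < p) (hp2 : p < 2) (hu : 0 < u) (hvp : p < v) (hv2 : v < 2)
    (hϱ : 0 < ϱ) (hcl : 0 < cl) (hclr : cl ≤ cr) :
    ∃ C > 0, ∀ (δ α : ℝ) (x xobs xhat : ℕ → ℝ), 0 < δ → 0 < α →
      -- smoothness of the true solution: `‖x‖_{wℓ^v} ≤ ϱ`
      weakLpNorm v x ≤ ENNReal.ofReal ϱ →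
      -- deterministic noise level in `ℓ^2`
      lpNorm 2 (x - xobs) ≤ ENNReal.ofReal δ →
      -- a priori parameter choice with `θ = p(2−v)/(v(2−p))`
      cl * ϱ ^ (-(u / (p * (2 - v) / (v * (2 - p))))) *
          δ ^ (((1 - p * (2 - v) / (v * (2 - p))) * u + 2 * (p * (2 - v) / (v * (2 - p)))) /
            (p * (2 - v) / (v * (2 - p)))) ≤ α →
      α ≤ cr * ϱ ^ (-(u / (p * (2 - v) / (v * (2 - p))))) *
          δ ^ (((1 - p * (2 - v) / (v * (2 - p))) * u + 2 * (p * (2 - v) / (v * (2 - p)))) /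
            (p * (2 - v) / (v * (2 - p)))) →
      -- `x̂_α` minimizes the Tikhonov functional over `ℓ^p`
      (lpNorm p xhat ≠ ⊤ ∧ ∀ z : ℕ → ℝ,
        ENNReal.ofReal (1 / (2 * α)) * lpNorm 2 (xobs - xhat) ^ (2 : ℝ) +
            ENNReal.ofReal (1 / u) * lpNorm p xhat ^ u ≤
          ENNReal.ofReal (1 / (2 * α)) * lpNorm 2 (xobs - z) ^ (2 : ℝ) +
            ENNReal.ofReal (1 / u) * lpNorm p z ^ u) →
      lpNorm 2 (x - xhat) ≤ ENNReal.ofReal (C * δ) ∧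
      lpNorm p xhat ≤ ENNReal.ofReal (C * δ ^ (2 * (p - v) / (p * (2 - v)))) := by
  have hv0 : 0 < v := hp0.trans hvp
  have h2v : 0 < 2 - v := by linarith
  have h2p : 0 < 2 - p := by linarith
  have hcr : 0 < cr := hcl.trans_le hclr
  have h1v : (0:ℝ) < 1 - 2 ^ (v - 2) := by
    have := Real.rpow_lt_one_of_one_lt_of_neg (by norm_num : (1:ℝ) < 2)
      (by linarith : v - 2 < 0)
    linarith
  have h1p : (0:ℝ) < 1 - 2 ^ (p - v) := by
    have := Real.rpow_lt_one_of_one_lt_of_neg (by norm_num : (1:ℝ) < 2)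
      (by linarith : p - v < 0)
    linarith
  set KA : ℝ := ((2:ℝ) ^ v * (1 - (2:ℝ) ^ (v - 2))⁻¹) ^ ((1:ℝ)/2) with hKAdef
  set KB : ℝ := ((2:ℝ) ^ p * (1 - (2:ℝ) ^ (p - v))⁻¹) ^ ((1:ℝ)/p) with hKBdef
  set G : ℝ := ϱ ^ (v * (2 - p) / (p * (2 - v))) with hGdef
  have hKA0 : 0 < KA :=
    Real.rpow_pos_of_pos (mul_pos (Real.rpow_pos_of_pos two_pos v) (inv_pos.2 h1v)) _
  have hKB0 : 0 < KB :=
    Real.rpow_pos_of_pos (mul_pos (Real.rpow_pos_of_pos two_pos p) (inv_pos.2 h1p)) _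
  have hG0 : 0 < G := Real.rpow_pos_of_pos hϱ _
  set M1 : ℝ := (1 + KA) ^ (2:ℝ) + 2 * cr * KB ^ u / u with hM1def
  set M2 : ℝ := u * (1 + KA) ^ (2:ℝ) / (2 * cl) + KB ^ u with hM2def
  have hM1 : 0 < M1 := by
    have := Real.rpow_pos_of_pos (by linarith : (0:ℝ) < 1 + KA) (2:ℝ)
    have := Real.rpow_pos_of_pos hKB0 u
    have : 0 < 2 * cr * KB ^ u / u := by positivity
    positivity
  have hM2 : 0 < M2 := by
    have h1 := Real.rpow_pos_of_pos (by linarith : (0:ℝ) < 1 + KA) (2:ℝ)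
    have h2 := Real.rpow_pos_of_pos hKB0 u
    positivity
  refine ⟨max (1 + M1 ^ ((1:ℝ)/2)) (M2 ^ ((1:ℝ)/u) * G), ?_, ?_⟩
  · have : 0 < 1 + M1 ^ ((1:ℝ)/2) := by
      have := Real.rpow_pos_of_pos hM1 ((1:ℝ)/2)
      linarith
    exact this.trans_le (le_max_left _ _)
  intro δ α x xobs xhat hδ hα hw hnoise hαl hαr hmin
  set C : ℝ := max (1 + M1 ^ ((1:ℝ)/2)) (M2 ^ ((1:ℝ)/u) * G) with hCdef
  set θ : ℝ := p * (2 - v) / (v * (2 - p)) with hθdef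
  set μ : ℝ := 2 * (p - v) / (p * (2 - v)) with hμdef
  have hθ0 : 0 < θ := by rw [hθdef]; positivity
  set E : ℝ := ϱ ^ (-(u / θ)) * δ ^ (((1 - θ) * u + 2 * θ) / θ) with hEdef
  have hE0 : 0 < E := by
    rw [hEdef]
    positivity
  have hαl' : cl * E ≤ α := by rw [hEdef, ← mul_assoc]; exact hαl
  have hαr' : α ≤ cr * E := by rw [hEdef, ← mul_assoc]; exact hαr
  set β : ℝ := ϱ ^ (-(v / (2 - v))) * δ ^ (2 / (2 - v)) with hβdef
  have hβ0 : 0 < β := by rw [hβdef]; positivity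
  set z : ℕ → ℝ := fun k => if β < |x k| then x k else 0 with hzdef
  -- basic rpow arithmetic helpers
  have hmulϱ : ∀ a b : ℝ, ϱ ^ a * ϱ ^ b = ϱ ^ (a + b) := fun a b => (Real.rpow_add hϱ a b).symm
  have hmulδ : ∀ a b : ℝ, δ ^ a * δ ^ b = δ ^ (a + b) := fun a b => (Real.rpow_add hδ a b).symm
  have hbpow : ∀ s : ℝ, β ^ s = ϱ ^ (-(v / (2 - v)) * s) * δ ^ (2 / (2 - v) * s) := by
    intro s
    rw [hβdef, Real.mul_rpow (Real.rpow_nonneg hϱ.le _) (Real.rpow_nonneg hδ.le _),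
      ← Real.rpow_mul hϱ.le, ← Real.rpow_mul hδ.le]
  have I1 : ϱ ^ v * β ^ (2 - v) = δ ^ (2:ℝ) := by
    have e1 : v + -(v / (2 - v)) * (2 - v) = 0 := by field_simp; ring
    have e2 : 2 / (2 - v) * (2 - v) = 2 := by field_simp
    rw [hbpow (2 - v), ← mul_assoc, hmulϱ, e1, e2, Real.rpow_zero, one_mul]
  have I2 : ϱ ^ v * β ^ (p - v) = (G * δ ^ μ) ^ (p:ℝ) := by
    have e3 : v + -(v / (2 - v)) * (p - v) = v * (2 - p) / (p * (2 - v)) * p := by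
      field_simp
      ring
    have e4 : 2 / (2 - v) * (p - v) = μ * p := by
      rw [hμdef]
      field_simp
    rw [hbpow (p - v), ← mul_assoc, hmulϱ, e3, e4, Real.mul_rpow hG0.le
      (Real.rpow_nonneg hδ.le _), hGdef, ← Real.rpow_mul hϱ.le, ← Real.rpow_mul hδ.le]
  set Q : ℝ := G ^ u * δ ^ (u * μ) with hQdef
  have hQ0 : 0 < Q := by
    rw [hQdef]
    positivity
  have key : E * Q = δ ^ (2:ℝ) := by
    have eA : -(u / θ) + v * (2 - p) / (p * (2 - v)) * u = 0 := by
      rw [hθdef]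
      field_simp
      ring
    have eB : ((1 - θ) * u + 2 * θ) / θ + u * μ = 2 := by
      rw [hθdef, hμdef]
      field_simp
      ring
    calc E * Q = (ϱ ^ (-(u / θ)) * ϱ ^ (v * (2 - p) / (p * (2 - v)) * u)) *
          (δ ^ (((1 - θ) * u + 2 * θ) / θ) * δ ^ (u * μ)) := by
          rw [hEdef, hQdef, hGdef, ← Real.rpow_mul hϱ.le]
          ring
      _ = ϱ ^ (-(u / θ) + v * (2 - p) / (p * (2 - v)) * u) *
          δ ^ (((1 - θ) * u + 2 * θ) / θ + u * μ) := by rw [hmulϱ, hmulδ]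
      _ = δ ^ (2:ℝ) := by rw [eA, eB, Real.rpow_zero, one_mul]
  -- bound on ‖x − z‖₂
  have hxz : lpNorm 2 (x - z) ≤ ENNReal.ofReal (KA * δ) := by
    have hcongr : lpNorm 2 (x - z) = lpNorm 2 (fun k => if β < |x k| then 0 else x k) := by
      apply lpNorm_congr
      intro k
      by_cases h : β < |x k| <;> simp [hzdef, h]
    have hsum := smallPartSum hv0 hv2 hβ0 hϱ hw
    have hval : ((2:ℝ) ^ v * (ϱ ^ v * β ^ (2 - v)) * (1 - (2:ℝ) ^ (v - 2))⁻¹) ^ ((1:ℝ)/2)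
        = KA * δ := by
      rw [I1, hKAdef, show (2:ℝ) ^ v * δ ^ (2:ℝ) * (1 - (2:ℝ) ^ (v - 2))⁻¹
          = ((2:ℝ) ^ v * (1 - (2:ℝ) ^ (v - 2))⁻¹) * δ ^ (2:ℝ) by ring,
        Real.mul_rpow (by positivity) (Real.rpow_nonneg hδ.le _),
        ← Real.rpow_mul hδ.le]
      norm_num
    rw [hcongr, ← hval]
    exact lpNorm_le_of_tsum_le two_pos (by positivity) hsum
  -- bound on ‖z‖ₚ
  have hz : lpNorm p z ≤ ENNReal.ofReal (KB * (G * δ ^ μ)) := by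
    have hsum := bigPartSum hp0 hvp hv0 hβ0 hϱ hw
    have hval : ((2:ℝ) ^ p * (ϱ ^ v * β ^ (p - v)) * (1 - (2:ℝ) ^ (p - v))⁻¹) ^ ((1:ℝ)/p)
        = KB * (G * δ ^ μ) := by
      rw [I2, hKBdef, show (2:ℝ) ^ p * (G * δ ^ μ) ^ (p:ℝ) * (1 - (2:ℝ) ^ (p - v))⁻¹
          = ((2:ℝ) ^ p * (1 - (2:ℝ) ^ (p - v))⁻¹) * (G * δ ^ μ) ^ (p:ℝ) by ring,
        Real.mul_rpow (by positivity) (Real.rpow_nonneg (by positivity) _),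
        ← Real.rpow_mul (by positivity : (0:ℝ) ≤ G * δ ^ μ), mul_one_div,
        div_self hp0.ne', Real.rpow_one]
    rw [← hval]
    exact lpNorm_le_of_tsum_le hp0 (by positivity) hsum
  -- noise bound with arguments swapped
  have hnoise' : lpNorm 2 (xobs - x) ≤ ENNReal.ofReal δ := by
    rw [lpNorm_congr 2 (xobs - x) (x - xobs) (fun k => by
      simp only [Pi.sub_apply]
      exact abs_sub_comm _ _)]
    exact hnoise
  set D : ℝ := (1 + KA) * δ with hDdef
  have hD0 : 0 < D := by rw [hDdef]; positivity
  set P : ℝ := KB * (G * δ ^ μ) with hPdef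
  have hP0 : 0 < P := by rw [hPdef]; positivity
  set R : ℝ := D ^ (2:ℝ) / (2 * α) + P ^ u / u with hRdef
  have hR0 : 0 < R := by
    rw [hRdef]
    have := Real.rpow_pos_of_pos hD0 (2:ℝ)
    have := Real.rpow_pos_of_pos hP0 u
    positivity
  -- bound on ‖xobs − z‖₂
  have hobsz : lpNorm 2 (xobs - z) ≤ ENNReal.ofReal D := by
    have hsplit : xobs - z = (xobs - x) + (x - z) := by
      funext k
      simp only [Pi.sub_apply, Pi.add_apply]
      ring
    rw [hsplit, hDdef]
    refine (l2_triangle _ _).trans ?_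
    calc lpNorm 2 (xobs - x) + lpNorm 2 (x - z)
        ≤ ENNReal.ofReal δ + ENNReal.ofReal (KA * δ) := add_le_add hnoise' hxz
      _ = ENNReal.ofReal ((1 + KA) * δ) := by
          rw [← ENNReal.ofReal_add hδ.le (by positivity)]
          ring_nf
  -- the Tikhonov minimality at z
  have hRHS : ENNReal.ofReal (1 / (2 * α)) * lpNorm 2 (xobs - z) ^ (2:ℝ) +
      ENNReal.ofReal (1 / u) * lpNorm p z ^ u ≤ ENNReal.ofReal R := by
    calc ENNReal.ofReal (1 / (2 * α)) * lpNorm 2 (xobs - z) ^ (2:ℝ) +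
        ENNReal.ofReal (1 / u) * lpNorm p z ^ u
        ≤ ENNReal.ofReal (1 / (2 * α)) * (ENNReal.ofReal D) ^ (2:ℝ) +
          ENNReal.ofReal (1 / u) * (ENNReal.ofReal P) ^ u := by
          refine add_le_add (mul_le_mul_right ?_ _) (mul_le_mul_right ?_ _)
          · exact ENNReal.rpow_le_rpow hobsz (by norm_num)
          · exact ENNReal.rpow_le_rpow hz hu.le
      _ = ENNReal.ofReal (1 / (2 * α) * D ^ (2:ℝ) + 1 / u * P ^ u) := by
          rw [ENNReal.ofReal_rpow_of_nonneg hD0.le (by norm_num),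
            ENNReal.ofReal_rpow_of_nonneg hP0.le hu.le,
            ← ENNReal.ofReal_mul (by positivity), ← ENNReal.ofReal_mul (by positivity),
            ← ENNReal.ofReal_add (by positivity) (by positivity)]
      _ = ENNReal.ofReal R := by
          rw [hRdef]
          ring_nf
  have hAB := (hmin.2 z).trans hRHS
  have hA : ENNReal.ofReal (1 / (2 * α)) * lpNorm 2 (xobs - xhat) ^ (2:ℝ) ≤
      ENNReal.ofReal R := le_trans le_self_add hAB
  have hB : ENNReal.ofReal (1 / u) * lpNorm p xhat ^ u ≤ ENNReal.ofReal R :=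
    le_trans le_add_self hAB
  have hL2hat : lpNorm 2 (xobs - xhat) ≤ ENNReal.ofReal ((2 * α * R) ^ ((1:ℝ)/2)) := by
    have h1 := extract_bound (a := 2 * α) (by positivity) hA
    calc lpNorm 2 (xobs - xhat) = (lpNorm 2 (xobs - xhat) ^ (2:ℝ)) ^ ((1:ℝ)/2) :=
          (rpow_rpow_cancel (by norm_num)).symm
      _ ≤ (ENNReal.ofReal (2 * α * R)) ^ ((1:ℝ)/2) := ENNReal.rpow_le_rpow h1 (by norm_num)
      _ = ENNReal.ofReal ((2 * α * R) ^ ((1:ℝ)/2)) :=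
          ENNReal.ofReal_rpow_of_nonneg (by positivity) (by norm_num)
  have hLphat : lpNorm p xhat ≤ ENNReal.ofReal ((u * R) ^ ((1:ℝ)/u)) := by
    have h1 := extract_bound (a := u) hu hB
    calc lpNorm p xhat = (lpNorm p xhat ^ u) ^ ((1:ℝ)/u) :=
          (rpow_rpow_cancel hu.ne').symm
      _ ≤ (ENNReal.ofReal (u * R)) ^ ((1:ℝ)/u) := ENNReal.rpow_le_rpow h1 (by positivity)
      _ = ENNReal.ofReal ((u * R) ^ ((1:ℝ)/u)) :=
          ENNReal.ofReal_rpow_of_nonneg (by positivity) (by positivity)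
  -- real-number final bounds
  have hPu : P ^ u = KB ^ u * Q := by
    rw [hPdef, hQdef, Real.mul_rpow hKB0.le (by positivity),
      Real.mul_rpow hG0.le (Real.rpow_nonneg hδ.le _), ← Real.rpow_mul hδ.le,
      mul_comm μ u]
  have h2αR : 2 * α * R ≤ M1 * δ ^ (2:ℝ) := by
    have hD2 : D ^ (2:ℝ) = (1 + KA) ^ (2:ℝ) * δ ^ (2:ℝ) := by
      rw [hDdef, Real.mul_rpow (by positivity) hδ.le]
    have hαP : α * P ^ u ≤ cr * KB ^ u * δ ^ (2:ℝ) := by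
      calc α * P ^ u ≤ (cr * E) * P ^ u :=
            mul_le_mul_of_nonneg_right hαr' (by positivity)
        _ = cr * KB ^ u * (E * Q) := by rw [hPu]; ring
        _ = cr * KB ^ u * δ ^ (2:ℝ) := by rw [key]
    have hexp : 2 * α * R = D ^ (2:ℝ) + (2 / u) * (α * P ^ u) := by
      rw [hRdef]
      field_simp
    rw [hexp, hD2, hM1def]
    have : (2 / u) * (α * P ^ u) ≤ (2 / u) * (cr * KB ^ u * δ ^ (2:ℝ)) := by
      apply mul_le_mul_of_nonneg_left hαP (by positivity)
    calc (1 + KA) ^ (2:ℝ) * δ ^ (2:ℝ) + 2 / u * (α * P ^ u)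
        ≤ (1 + KA) ^ (2:ℝ) * δ ^ (2:ℝ) + 2 / u * (cr * KB ^ u * δ ^ (2:ℝ)) := by linarith
      _ = ((1 + KA) ^ (2:ℝ) + 2 * cr * KB ^ u / u) * δ ^ (2:ℝ) := by ring
  have huR : u * R ≤ M2 * Q := by
    have hD2 : D ^ (2:ℝ) = (1 + KA) ^ (2:ℝ) * δ ^ (2:ℝ) := by
      rw [hDdef, Real.mul_rpow (by positivity) hδ.le]
    have hdiv : D ^ (2:ℝ) / (2 * α) ≤ (1 + KA) ^ (2:ℝ) * Q / (2 * cl) := by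
      calc D ^ (2:ℝ) / (2 * α) ≤ D ^ (2:ℝ) / (2 * (cl * E)) := by
            apply div_le_div_of_nonneg_left (by positivity) (by positivity)
            linarith
        _ = (1 + KA) ^ (2:ℝ) * Q / (2 * cl) := by
            rw [hD2, ← key]
            field_simp
    have hexp : u * R = u * (D ^ (2:ℝ) / (2 * α)) + P ^ u := by
      rw [hRdef]
      field_simp
    rw [hexp, hPu, hM2def]
    have h1 : u * (D ^ (2:ℝ) / (2 * α)) ≤ u * ((1 + KA) ^ (2:ℝ) * Q / (2 * cl)) :=
      mul_le_mul_of_nonneg_left hdiv hu.le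
    calc u * (D ^ (2:ℝ) / (2 * α)) + KB ^ u * Q
        ≤ u * ((1 + KA) ^ (2:ℝ) * Q / (2 * cl)) + KB ^ u * Q := by linarith
      _ = (u * (1 + KA) ^ (2:ℝ) / (2 * cl) + KB ^ u) * Q := by ring
  constructor
  · -- ‖x − x̂‖₂ ≤ C δ
    have hsplit : x - xhat = (x - xobs) + (xobs - xhat) := by
      funext k
      simp only [Pi.sub_apply, Pi.add_apply]
      ring
    have hreal : (2 * α * R) ^ ((1:ℝ)/2) ≤ M1 ^ ((1:ℝ)/2) * δ := by
      calc (2 * α * R) ^ ((1:ℝ)/2) ≤ (M1 * δ ^ (2:ℝ)) ^ ((1:ℝ)/2) :=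
            Real.rpow_le_rpow (by positivity) h2αR (by norm_num)
        _ = M1 ^ ((1:ℝ)/2) * δ := by
            rw [Real.mul_rpow hM1.le (Real.rpow_nonneg hδ.le _), ← Real.rpow_mul hδ.le]
            norm_num
    rw [hsplit]
    refine (l2_triangle _ _).trans ?_
    calc lpNorm 2 (x - xobs) + lpNorm 2 (xobs - xhat)
        ≤ ENNReal.ofReal δ + ENNReal.ofReal ((2 * α * R) ^ ((1:ℝ)/2)) :=
          add_le_add hnoise hL2hat
      _ = ENNReal.ofReal (δ + (2 * α * R) ^ ((1:ℝ)/2)) :=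
          (ENNReal.ofReal_add hδ.le (by positivity)).symm
      _ ≤ ENNReal.ofReal (C * δ) := by
          apply ENNReal.ofReal_le_ofReal
          have hC1 : 1 + M1 ^ ((1:ℝ)/2) ≤ C := le_max_left _ _
          have hmono := mul_le_mul_of_nonneg_right hC1 hδ.le
          have hexp : (1 + M1 ^ ((1:ℝ)/2)) * δ = δ + M1 ^ ((1:ℝ)/2) * δ := by ring
          linarith [hreal]
  · -- ‖x̂‖ₚ ≤ C δ^μ
    have hQr : Q ^ ((1:ℝ)/u) = G * δ ^ μ := by
      rw [hQdef, Real.mul_rpow (Real.rpow_nonneg hG0.le _) (Real.rpow_nonneg hδ.le _),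
        ← Real.rpow_mul hG0.le, ← Real.rpow_mul hδ.le,
        show u * ((1:ℝ)/u) = 1 by field_simp,
        show u * μ * ((1:ℝ)/u) = μ by field_simp,
        Real.rpow_one]
    have hreal : (u * R) ^ ((1:ℝ)/u) ≤ M2 ^ ((1:ℝ)/u) * (G * δ ^ μ) := by
      calc (u * R) ^ ((1:ℝ)/u) ≤ (M2 * Q) ^ ((1:ℝ)/u) :=
            Real.rpow_le_rpow (by positivity) huR (by positivity)
        _ = M2 ^ ((1:ℝ)/u) * Q ^ ((1:ℝ)/u) := Real.mul_rpow hM2.le hQ0.le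
        _ = M2 ^ ((1:ℝ)/u) * (G * δ ^ μ) := by rw [hQr]
    refine hLphat.trans ?_
    apply ENNReal.ofReal_le_ofReal
    have hC2 : M2 ^ ((1:ℝ)/u) * G ≤ C := le_max_right _ _
    calc (u * R) ^ ((1:ℝ)/u) ≤ M2 ^ ((1:ℝ)/u) * (G * δ ^ μ) := hreal
      _ = (M2 ^ ((1:ℝ)/u) * G) * δ ^ μ := by ring
      _ ≤ C * δ ^ μ := mul_le_mul_of_nonneg_right hC2 (Real.rpow_nonneg hδ.le _)
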